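/- Let k ≥ 4 and s ∈ {4,…,k}, and let F = F_{enc,s,k}(u,v,w; y₄,…,y_k) be obtained by gluing the gadgets F₁, F₄, …, F_k (identifying the shared vertices u, v, w, y₄,…,y_k). Let f assign colors in [k] to A = {u,v,w,y₄,…,y_k} with f(y_i) = i for 4 ≤ i ≤ k. Then f extends to a proper k-coloring of F if and only if exactly one of the following holds: (a) f(u) ∈ {1,2,3} and f(u) = f(v) = f(w); (b) f(u) = s, f(v), f(w) ∈ {1,2,3}, and f(v) ≠ f(w); (c) f(u) ∈ {4,…,k} \ {s} and f(v) = f(w) ∈ {1,2,3}. -/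

import Mathlib

/-- `c` is a proper `k`-coloring of `G` with colors in `[k] = {1,…,k}`. -/
def IsProperKColoring {V : Type*} (G : SimpleGraph V) (k : ℕ) (c : V → ℕ) : Prop :=
  (∀ v, c v ∈ Finset.Icc 1 k) ∧ ∀ ⦃x y⦄, G.Adj x y → c x ≠ c y

/-- Index type for the vertices `y₄, …, y_k`. -/
def Yk (k : ℕ) : Type := {i : ℕ // 4 ≤ i ∧ i ≤ k}

/-- Internal (non-shared) vertices of the pieces of the gadget
`F_{enc,s,k}`.  A pair `(r, i)` denotes the `i`-th internal vertex of the
piece `F_r`; `r = 1` stands for the piece `F₁`, which has internal vertices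
`v₁, v₂, w₁, w₂` (indices `0,1,2,3`); the piece `F_s` has internal vertices
`u', w₁, w₂` (indices `0,1,2`); a piece `F_r` with `r ∈ {4,…,k} \ {s}` has
internal vertices `u', v₁, v₂, w₁, w₂` (indices `0,1,2,3,4`). -/
def EncInt (k s : ℕ) : Type :=
  {p : ℕ × ℕ // (p.1 = 1 ∧ p.2 < 4) ∨
    (4 ≤ p.1 ∧ p.1 ≤ k ∧ ((p.1 = s ∧ p.2 < 3) ∨ (p.1 ≠ s ∧ p.2 < 5)))}

/-- Vertices of `F_{enc,s,k}(u,v,w;y₄,…,y_k)`: the shared vertices `u = 0`,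
`v = 1`, `w = 2` and `y₄,…,y_k`, plus the internal vertices of the pieces. -/
def EV (k s : ℕ) : Type := Fin 3 ⊕ Yk k ⊕ EncInt k s

/-- The adjacency (before symmetrization) of the gadget `F_{enc,s,k}`,
obtained by gluing the pieces `F₁, F₄, …, F_k` along `u, v, w, y₄, …, y_k`. -/
def encRel (k s : ℕ) : EV k s → EV k s → Prop
  | .inl a, .inr (.inl _) => a ≠ 0
  | .inl a, .inr (.inr p) =>
      (p.1.1 = 1 ∧ (a = 0 ∨ (a = 1 ∧ p.1.2 < 2) ∨ (a = 2 ∧ 2 ≤ p.1.2)))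
      ∨ (p.1.1 = s ∧ ((a = 0 ∧ p.1.2 = 0) ∨ (a = 1 ∧ p.1.2 = 0) ∨ (a = 2 ∧ p.1.2 ≠ 0)))
      ∨ (4 ≤ p.1.1 ∧ p.1.1 ≠ s ∧ ((a = 0 ∧ p.1.2 = 0) ∨ (a = 1 ∧ (p.1.2 = 1 ∨ p.1.2 = 2))
          ∨ (a = 2 ∧ (p.1.2 = 3 ∨ p.1.2 = 4))))
  | .inr (.inl j), .inr (.inr p) => ¬(p.1.1 = j.1 ∧ p.1.2 = 0)
  | .inr (.inr p), .inr (.inr q) =>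
      p.1.1 = q.1.1 ∧
      ((p.1.1 = 1 ∧ (p.1.2, q.1.2) ∈ ([(0,1),(2,3)] : List (ℕ × ℕ)))
       ∨ (p.1.1 = s ∧ (p.1.2, q.1.2) ∈ ([(0,1),(0,2),(1,2)] : List (ℕ × ℕ)))
       ∨ (4 ≤ p.1.1 ∧ p.1.1 ≠ s ∧
          (p.1.2, q.1.2) ∈ ([(0,1),(0,2),(0,3),(0,4),(1,2),(3,4)] : List (ℕ × ℕ))))
  | _, _ => False

/-- The gadget `F_{enc,s,k}(u,v,w;y₄,…,y_k)`. -/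
def Fenc (k s : ℕ) : SimpleGraph (EV k s) := SimpleGraph.fromRel (encRel k s)

namespace FencAux

def aa (x : ℕ) : ℕ := if x = 1 then 2 else 1
def bb (x : ℕ) : ℕ := if x = 3 then 2 else 3

lemma hab (x : ℕ) : aa x ≠ x ∧ bb x ≠ x ∧ aa x ≠ bb x ∧ 1 ≤ aa x ∧ aa x ≤ 2 ∧ 2 ≤ bb x ∧ bb x ≤ 3 := by
  unfold aa bb; split <;> split <;> omega

def colInt (s fu fv fw r i : ℕ) : ℕ :=
  if r = 1 then (if i = 0 then aa fv else if i = 1 then bb fv else if i = 2 then aa fw else bb fw)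
  else if i = 0 then (if fu = r then (if r = s then fw else fv) else r)
  else if r = s then (if i = 1 then aa fw else bb fw)
  else if i = 1 then aa fv else if i = 2 then bb fv else if i = 3 then aa fw else bb fw

def col (k s fu fv fw : ℕ) : EV k s → ℕ
  | .inl a => if a = 0 then fu else if a = 1 then fv else fw
  | .inr (.inl y) => y.1
  | .inr (.inr p) => colInt s fu fv fw p.1.1 p.1.2

set_option maxHeartbeats 2000000 in
lemma construct (k s fu fv fw : ℕ) (hk : 4 ≤ k) (hs4 : 4 ≤ s) (hsk : s ≤ k)
    (hfu : 1 ≤ fu ∧ fu ≤ k) (hfv : 1 ≤ fv ∧ fv ≤ 3) (hfw : 1 ≤ fw ∧ fw ≤ 3)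
    (H1 : fu ≤ 3 → fu = fv ∧ fv = fw)
    (H2 : fu = s → fv ≠ fw)
    (H3 : 4 ≤ fu → fu ≠ s → fv = fw) :
    IsProperKColoring (Fenc k s) k (col k s fu fv fw) := by
  constructor
  · intro x
    rw [Finset.mem_Icc]
    match x with
    | .inl a =>
      simp only [col]
      split
      · exact hfu
      · split <;> omega
    | .inr (.inl y) =>
      have hy : 4 ≤ y.1 ∧ y.1 ≤ k := y.2
      simp only [col]; omega
    | .inr (.inr p) =>
      obtain ⟨⟨r, i⟩, hp⟩ := p
      have hp : (r = 1 ∧ i < 4) ∨ (4 ≤ r ∧ r ≤ k ∧ ((r = s ∧ i < 3) ∨ (r ≠ s ∧ i < 5))) := hp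
      have h1 := hab fv; have h2 := hab fw
      simp only [col, colInt]
      split_ifs <;> omega
  · have key : ∀ x y : EV k s, encRel k s x y →
        col k s fu fv fw x ≠ col k s fu fv fw y := by
      intro x y h
      have h1 := hab fv; have h2 := hab fw
      match x, y with
      | .inl a, .inl b => exact absurd h (by simp [encRel])
      | .inl a, .inr (.inl y) =>
        have ha : a ≠ 0 := h
        have ha' : a = 1 ∨ a = 2 := by omega
        have hy : 4 ≤ y.1 ∧ y.1 ≤ k := y.2
        rcases ha' with rfl | rfl <;> simp [col] <;> omega
      | .inl a, .inr (.inr p) =>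
        obtain ⟨⟨r, i⟩, hp⟩ := p
        have hp' : (r = 1 ∧ i < 4) ∨ (4 ≤ r ∧ r ≤ k ∧ ((r = s ∧ i < 3) ∨ (r ≠ s ∧ i < 5))) := hp
        have h' : (r = 1 ∧ (a = 0 ∨ (a = 1 ∧ i < 2) ∨ (a = 2 ∧ 2 ≤ i)))
            ∨ (r = s ∧ ((a = 0 ∧ i = 0) ∨ (a = 1 ∧ i = 0) ∨ (a = 2 ∧ i ≠ 0)))
            ∨ (4 ≤ r ∧ r ≠ s ∧ ((a = 0 ∧ i = 0) ∨ (a = 1 ∧ (i = 1 ∨ i = 2))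
                ∨ (a = 2 ∧ (i = 3 ∨ i = 4)))) := h
        show (if a = 0 then fu else if a = 1 then fv else fw) ≠ colInt s fu fv fw r i
        have ha : a = 0 ∨ a = 1 ∨ a = 2 := by omega
        rcases ha with rfl | rfl | rfl <;> simp only [] at h' ⊢ <;>
          · simp at h' ⊢
            unfold colInt
            split_ifs <;> omega
      | .inr (.inl y), .inl b => exact absurd h (by simp [encRel])
      | .inr (.inl y), .inr (.inl z) => exact absurd h (by simp [encRel])
      | .inr (.inl y), .inr (.inr p) =>
        obtain ⟨⟨r, i⟩, hp⟩ := p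
        have hy : 4 ≤ y.1 ∧ y.1 ≤ k := y.2
        have h' : ¬(r = y.1 ∧ i = 0) := h
        simp only [col, colInt]
        split_ifs <;> omega
      | .inr (.inr p), .inl b => exact absurd h (by simp [encRel])
      | .inr (.inr p), .inr (.inl z) => exact absurd h (by simp [encRel])
      | .inr (.inr p), .inr (.inr q) =>
        obtain ⟨⟨r, i⟩, hp⟩ := p
        obtain ⟨⟨r', i'⟩, hq⟩ := q
        obtain ⟨rfl, h'⟩ := h
        have hp' : (r = 1 ∧ i < 4) ∨ (4 ≤ r ∧ r ≤ k ∧ ((r = s ∧ i < 3) ∨ (r ≠ s ∧ i < 5))) := hp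
        have h'' : (r = 1 ∧ ((i = 0 ∧ i' = 1) ∨ (i = 2 ∧ i' = 3)))
            ∨ (r = s ∧ ((i = 0 ∧ i' = 1) ∨ (i = 0 ∧ i' = 2) ∨ (i = 1 ∧ i' = 2)))
            ∨ (4 ≤ r ∧ r ≠ s ∧ ((i = 0 ∧ i' = 1) ∨ (i = 0 ∧ i' = 2) ∨ (i = 0 ∧ i' = 3)
                ∨ (i = 0 ∧ i' = 4) ∨ (i = 1 ∧ i' = 2) ∨ (i = 3 ∧ i' = 4))) := by
          have h3 : (r = 1 ∧ (i,i') ∈ ([(0,1),(2,3)] : List (ℕ × ℕ)))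
              ∨ (r = s ∧ (i,i') ∈ ([(0,1),(0,2),(1,2)] : List (ℕ × ℕ)))
              ∨ (4 ≤ r ∧ r ≠ s ∧
                (i,i') ∈ ([(0,1),(0,2),(0,3),(0,4),(1,2),(3,4)] : List (ℕ × ℕ))) := h'
          simpa [List.mem_cons, Prod.mk.injEq] using h3
        show colInt s fu fv fw r i ≠ colInt s fu fv fw r i'
        unfold colInt
        split_ifs <;> omega
    intro x y hadj
    rw [Fenc, SimpleGraph.fromRel_adj] at hadj
    obtain ⟨hne, h | h⟩ := hadj
    · exact key _ _ h
    · exact (key _ _ h).symm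

end FencAux

namespace FencAux


lemma neYI {k s : ℕ} {y : Yk k} {p : EncInt k s} :
    (Sum.inr (Sum.inl y) : EV k s) ≠ Sum.inr (Sum.inr p) :=
  fun he => Sum.inl_ne_inr (Sum.inr.inj (show (Sum.inr (Sum.inl y) : Fin 3 ⊕ Yk k ⊕ EncInt k s) = Sum.inr (Sum.inr p) from he))

lemma neII {k s : ℕ} {p q : EncInt k s} (h : p.1 ≠ q.1) :
    (Sum.inr (Sum.inr p) : EV k s) ≠ Sum.inr (Sum.inr q) :=
  fun he => h (congrArg Subtype.val (Sum.inr_injective (Sum.inr_injective he)))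

set_option maxHeartbeats 1000000 in
lemma extract (k s : ℕ) (hk : 4 ≤ k) (hs4 : 4 ≤ s) (hsk : s ≤ k)
    (c : EV k s → ℕ) (hc : IsProperKColoring (Fenc k s) k c)
    (hcy : ∀ y : Yk k, c (.inr (.inl y)) = y.1) :
    c (.inl 1) ≤ 3 ∧ c (.inl 2) ≤ 3 ∧
    (c (.inl 0) ≤ 3 → c (.inl 0) = c (.inl 1) ∧ c (.inl 1) = c (.inl 2)) ∧
    (c (.inl 0) = s → c (.inl 1) ≠ c (.inl 2)) ∧
    (4 ≤ c (.inl 0) → c (.inl 0) ≠ s → c (.inl 1) = c (.inl 2)) := by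
  obtain ⟨hcr, hcp⟩ := hc
  have hrange : ∀ x, 1 ≤ c x ∧ c x ≤ k := fun x => Finset.mem_Icc.1 (hcr x)
  have hadj : ∀ x y : EV k s, x ≠ y → encRel k s x y → c x ≠ c y := by
    intro x y hne h
    exact hcp ((SimpleGraph.fromRel_adj _ _ _).2 ⟨hne, Or.inl h⟩)
  have hyne : ∀ (a : Fin 3), a ≠ 0 → ∀ j, 4 ≤ j → j ≤ k → c (.inl a) ≠ j := by
    intro a ha j h4 hk'
    have h := hadj (.inl a) (.inr (.inl ⟨j, h4, hk'⟩)) Sum.inl_ne_inr ha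
    rwa [hcy ⟨j, h4, hk'⟩] at h
  have hv3 : c (.inl 1) ≤ 3 := by
    by_contra hgt; push_neg at hgt
    exact hyne 1 (by decide) _ (by omega) (hrange (.inl 1)).2 rfl
  have hw3 : c (.inl 2) ≤ 3 := by
    by_contra hgt; push_neg at hgt
    exact hyne 2 (by decide) _ (by omega) (hrange (.inl 2)).2 rfl
  have hInt : ∀ r i (hp : (r = 1 ∧ i < 4) ∨
      (4 ≤ r ∧ r ≤ k ∧ ((r = s ∧ i < 3) ∨ (r ≠ s ∧ i < 5)))),
      c (.inr (.inr ⟨(r,i), hp⟩)) ≤ 3 ∨ (c (.inr (.inr ⟨(r,i), hp⟩)) = r ∧ i = 0) := by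
    intro r i hp
    by_contra hcon
    push_neg at hcon
    obtain ⟨h3, hor⟩ := hcon
    have h := hadj (.inr (.inl ⟨c (.inr (.inr ⟨(r,i), hp⟩)), by omega, (hrange _).2⟩))
      (.inr (.inr ⟨(r,i), hp⟩)) neYI
      (fun hand => (hor hand.1.symm) hand.2)
    exact h (hcy _)
  have ru' := hrange (.inl 0)
  have rv' := hrange (.inl 1)
  have rw' := hrange (.inl 2)
  refine ⟨hv3, hw3, ?_, ?_, ?_⟩
  · -- fu ≤ 3 → fu = fv and fv = fw
    intro h3
    have hp0 : ((1:ℕ), (0:ℕ)).1 = 1 ∧ ((1:ℕ),(0:ℕ)).2 < 4 := ⟨rfl, by simp⟩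
    -- vertices (1,0),(1,1),(1,2),(1,3)
    have hq : ∀ i, i < 4 → ((1:ℕ) = 1 ∧ i < 4) ∨
        (4 ≤ 1 ∧ 1 ≤ k ∧ ((1 = s ∧ i < 3) ∨ (1 ≠ s ∧ i < 5))) := fun i h => Or.inl ⟨rfl, h⟩
    have hq0 := hq 0 (by omega)
    have hq1 := hq 1 (by omega)
    have hq2 := hq 2 (by omega)
    have hq3 := hq 3 (by omega)
    have b0 := hInt 1 0 (hq0)
    have b1 := hInt 1 1 (hq1)
    have b2 := hInt 1 2 (hq2)
    have b3 := hInt 1 3 (hq3)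
    have r0 := hrange (.inr (.inr ⟨(1,0), hq0⟩))
    have r1 := hrange (.inr (.inr ⟨(1,1), hq1⟩))
    have r2 := hrange (.inr (.inr ⟨(1,2), hq2⟩))
    have r3 := hrange (.inr (.inr ⟨(1,3), hq3⟩))
    have u0 := hadj (.inl 0) (.inr (.inr ⟨(1,0), hq0⟩)) Sum.inl_ne_inr
      (Or.inl ⟨rfl, Or.inl rfl⟩)
    have u1 := hadj (.inl 0) (.inr (.inr ⟨(1,1), hq1⟩)) Sum.inl_ne_inr
      (Or.inl ⟨rfl, Or.inl rfl⟩)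
    have u2 := hadj (.inl 0) (.inr (.inr ⟨(1,2), hq2⟩)) Sum.inl_ne_inr
      (Or.inl ⟨rfl, Or.inl rfl⟩)
    have u3 := hadj (.inl 0) (.inr (.inr ⟨(1,3), hq3⟩)) Sum.inl_ne_inr
      (Or.inl ⟨rfl, Or.inl rfl⟩)
    have v0 := hadj (.inl 1) (.inr (.inr ⟨(1,0), hq0⟩)) Sum.inl_ne_inr
      (Or.inl ⟨rfl, Or.inr (Or.inl ⟨rfl, by simp⟩)⟩)
    have v1 := hadj (.inl 1) (.inr (.inr ⟨(1,1), hq1⟩)) Sum.inl_ne_inr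
      (Or.inl ⟨rfl, Or.inr (Or.inl ⟨rfl, by simp⟩)⟩)
    have w2 := hadj (.inl 2) (.inr (.inr ⟨(1,2), hq2⟩)) Sum.inl_ne_inr
      (Or.inl ⟨rfl, Or.inr (Or.inr ⟨rfl, by simp⟩)⟩)
    have w3 := hadj (.inl 2) (.inr (.inr ⟨(1,3), hq3⟩)) Sum.inl_ne_inr
      (Or.inl ⟨rfl, Or.inr (Or.inr ⟨rfl, by simp⟩)⟩)
    have e01 := hadj (.inr (.inr ⟨(1,0), hq0⟩)) (.inr (.inr ⟨(1,1), hq1⟩))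
      (neII (by simp)) ⟨rfl, Or.inl ⟨rfl, by simp⟩⟩
    have e23 := hadj (.inr (.inr ⟨(1,2), hq2⟩)) (.inr (.inr ⟨(1,3), hq3⟩))
      (neII (by simp)) ⟨rfl, Or.inl ⟨rfl, by simp⟩⟩
    omega
  · -- fu = s → fv ≠ fw
    intro hus
    have hq : ∀ i, i < 3 → ((s:ℕ) = 1 ∧ i < 4) ∨
        (4 ≤ s ∧ s ≤ k ∧ ((s = s ∧ i < 3) ∨ (s ≠ s ∧ i < 5))) :=
      fun i h => Or.inr ⟨hs4, hsk, Or.inl ⟨rfl, h⟩⟩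
    have hq0 := hq 0 (by omega)
    have hq1 := hq 1 (by omega)
    have hq2 := hq 2 (by omega)
    have b0 := hInt s 0 (hq0)
    have b1 := hInt s 1 (hq1)
    have b2 := hInt s 2 (hq2)
    have r0 := hrange (.inr (.inr ⟨(s,0), hq0⟩))
    have r1 := hrange (.inr (.inr ⟨(s,1), hq1⟩))
    have r2 := hrange (.inr (.inr ⟨(s,2), hq2⟩))
    have u0 := hadj (.inl 0) (.inr (.inr ⟨(s,0), hq0⟩)) Sum.inl_ne_inr
      (Or.inr (Or.inl ⟨rfl, Or.inl ⟨rfl, rfl⟩⟩))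
    have v0 := hadj (.inl 1) (.inr (.inr ⟨(s,0), hq0⟩)) Sum.inl_ne_inr
      (Or.inr (Or.inl ⟨rfl, Or.inr (Or.inl ⟨rfl, rfl⟩)⟩))
    have w1 := hadj (.inl 2) (.inr (.inr ⟨(s,1), hq1⟩)) Sum.inl_ne_inr
      (Or.inr (Or.inl ⟨rfl, Or.inr (Or.inr ⟨rfl, by simp⟩)⟩))
    have w2 := hadj (.inl 2) (.inr (.inr ⟨(s,2), hq2⟩)) Sum.inl_ne_inr
      (Or.inr (Or.inl ⟨rfl, Or.inr (Or.inr ⟨rfl, by simp⟩)⟩))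
    have e01 := hadj (.inr (.inr ⟨(s,0), hq0⟩)) (.inr (.inr ⟨(s,1), hq1⟩))
      (neII (by simp)) ⟨rfl, Or.inr (Or.inl ⟨rfl, by simp⟩)⟩
    have e02 := hadj (.inr (.inr ⟨(s,0), hq0⟩)) (.inr (.inr ⟨(s,2), hq2⟩))
      (neII (by simp)) ⟨rfl, Or.inr (Or.inl ⟨rfl, by simp⟩)⟩
    have e12 := hadj (.inr (.inr ⟨(s,1), hq1⟩)) (.inr (.inr ⟨(s,2), hq2⟩))
      (neII (by simp)) ⟨rfl, Or.inr (Or.inl ⟨rfl, by simp⟩)⟩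
    omega
  · -- 4 ≤ fu, fu ≠ s → fv = fw
    intro h4 hns
    set r := c (.inl 0) with hr
    have hq : ∀ i, i < 5 → ((r:ℕ) = 1 ∧ i < 4) ∨
        (4 ≤ r ∧ r ≤ k ∧ ((r = s ∧ i < 3) ∨ (r ≠ s ∧ i < 5))) :=
      fun i h => Or.inr ⟨h4, (hrange (.inl 0)).2, Or.inr ⟨hns, h⟩⟩
    have hq0 := hq 0 (by omega)
    have hq1 := hq 1 (by omega)
    have hq2 := hq 2 (by omega)
    have hq3 := hq 3 (by omega)
    have hq4 := hq 4 (by omega)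
    have b0 := hInt r 0 (hq0)
    have b1 := hInt r 1 (hq1)
    have b2 := hInt r 2 (hq2)
    have b3 := hInt r 3 (hq3)
    have b4 := hInt r 4 (hq4)
    have r0 := hrange (.inr (.inr ⟨(r,0), hq0⟩))
    have r1 := hrange (.inr (.inr ⟨(r,1), hq1⟩))
    have r2 := hrange (.inr (.inr ⟨(r,2), hq2⟩))
    have r3 := hrange (.inr (.inr ⟨(r,3), hq3⟩))
    have r4 := hrange (.inr (.inr ⟨(r,4), hq4⟩))
    have u0 := hadj (.inl 0) (.inr (.inr ⟨(r,0), hq0⟩)) Sum.inl_ne_inr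
      (Or.inr (Or.inr ⟨h4, hns, Or.inl ⟨rfl, rfl⟩⟩))
    have v1 := hadj (.inl 1) (.inr (.inr ⟨(r,1), hq1⟩)) Sum.inl_ne_inr
      (Or.inr (Or.inr ⟨h4, hns, Or.inr (Or.inl ⟨rfl, Or.inl rfl⟩)⟩))
    have v2 := hadj (.inl 1) (.inr (.inr ⟨(r,2), hq2⟩)) Sum.inl_ne_inr
      (Or.inr (Or.inr ⟨h4, hns, Or.inr (Or.inl ⟨rfl, Or.inr rfl⟩)⟩))
    have w3 := hadj (.inl 2) (.inr (.inr ⟨(r,3), hq3⟩)) Sum.inl_ne_inr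
      (Or.inr (Or.inr ⟨h4, hns, Or.inr (Or.inr ⟨rfl, Or.inl rfl⟩)⟩))
    have w4 := hadj (.inl 2) (.inr (.inr ⟨(r,4), hq4⟩)) Sum.inl_ne_inr
      (Or.inr (Or.inr ⟨h4, hns, Or.inr (Or.inr ⟨rfl, Or.inr rfl⟩)⟩))
    have e01 := hadj (.inr (.inr ⟨(r,0), hq0⟩)) (.inr (.inr ⟨(r,1), hq1⟩))
      (neII (by simp)) ⟨rfl, Or.inr (Or.inr ⟨h4, hns, by simp⟩)⟩
    have e02 := hadj (.inr (.inr ⟨(r,0), hq0⟩)) (.inr (.inr ⟨(r,2), hq2⟩))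
      (neII (by simp)) ⟨rfl, Or.inr (Or.inr ⟨h4, hns, by simp⟩)⟩
    have e03 := hadj (.inr (.inr ⟨(r,0), hq0⟩)) (.inr (.inr ⟨(r,3), hq3⟩))
      (neII (by simp)) ⟨rfl, Or.inr (Or.inr ⟨h4, hns, by simp⟩)⟩
    have e04 := hadj (.inr (.inr ⟨(r,0), hq0⟩)) (.inr (.inr ⟨(r,4), hq4⟩))
      (neII (by simp)) ⟨rfl, Or.inr (Or.inr ⟨h4, hns, by simp⟩)⟩
    have e12 := hadj (.inr (.inr ⟨(r,1), hq1⟩)) (.inr (.inr ⟨(r,2), hq2⟩))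
      (neII (by simp)) ⟨rfl, Or.inr (Or.inr ⟨h4, hns, by simp⟩)⟩
    have e34 := hadj (.inr (.inr ⟨(r,3), hq3⟩)) (.inr (.inr ⟨(r,4), hq4⟩))
      (neII (by simp)) ⟨rfl, Or.inr (Or.inr ⟨h4, hns, by simp⟩)⟩
    omega

end FencAux

/-- A function `f` on `A = {u,v,w,y₄,…,y_k}` with `f(yᵢ) = i` extends to a
proper `k`-coloring of `F_{enc,s,k}` iff exactly one of the following holds:
(a) `f u ∈ {1,2,3}` and `f u = f v = f w`;
(b) `f u = s`, `f v, f w ∈ {1,2,3}` and `f v ≠ f w`;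
(c) `f u ∈ {4,…,k} \ {s}` and `f v = f w ∈ {1,2,3}`. -/
theorem Fenc_extension (k s : ℕ) (hk : 4 ≤ k) (hs : 4 ≤ s ∧ s ≤ k)
    (f : EV k s → ℕ)
    (hfu : f (.inl 0) ∈ Finset.Icc 1 k) (hfv : f (.inl 1) ∈ Finset.Icc 1 k)
    (hfw : f (.inl 2) ∈ Finset.Icc 1 k)
    (hfy : ∀ y : Yk k, f (.inr (.inl y)) = y.1) :
    (∃ c : EV k s → ℕ, IsProperKColoring (Fenc k s) k c ∧
        c (.inl 0) = f (.inl 0) ∧ c (.inl 1) = f (.inl 1) ∧ c (.inl 2) = f (.inl 2) ∧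
        ∀ y : Yk k, c (.inr (.inl y)) = f (.inr (.inl y))) ↔
      (letI A : Prop := f (.inl 0) ∈ ({1,2,3} : Set ℕ) ∧
          f (.inl 0) = f (.inl 1) ∧ f (.inl 1) = f (.inl 2)
       letI B : Prop := f (.inl 0) = s ∧ f (.inl 1) ∈ ({1,2,3} : Set ℕ) ∧
          f (.inl 2) ∈ ({1,2,3} : Set ℕ) ∧ f (.inl 1) ≠ f (.inl 2)
       letI C : Prop := f (.inl 0) ∈ Finset.Icc 4 k ∧ f (.inl 0) ≠ s ∧
          f (.inl 1) = f (.inl 2) ∧ f (.inl 1) ∈ ({1,2,3} : Set ℕ)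
       (A ∧ ¬B ∧ ¬C) ∨ (¬A ∧ B ∧ ¬C) ∨ (¬A ∧ ¬B ∧ C)) := by
  obtain ⟨hs4, hsk⟩ := hs
  rw [Finset.mem_Icc] at hfu hfv hfw
  constructor
  · rintro ⟨c, hc, h0, h1, h2, hy⟩
    have hcy : ∀ y : Yk k, c (.inr (.inl y)) = y.1 := fun y => (hy y).trans (hfy y)
    obtain ⟨hv3, hw3, G1, G2, G3⟩ := FencAux.extract k s hk hs4 hsk c hc hcy
    rw [h1] at hv3
    rw [h2] at hw3
    rw [h0, h1, h2] at G1 G2 G3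
    simp only [Set.mem_insert_iff, Set.mem_singleton_iff, Finset.mem_Icc]
    by_cases hA : f (.inl 0) ≤ 3
    · obtain ⟨e1, e2⟩ := G1 hA
      exact Or.inl ⟨⟨by omega, e1, e2⟩, fun hB => by omega, fun hC => by omega⟩
    · by_cases hBs : f (.inl 0) = s
      · exact Or.inr (Or.inl ⟨fun hA' => by omega, ⟨hBs, by omega, by omega, G2 hBs⟩,
          fun hC => hC.2.1 hBs⟩)
      · exact Or.inr (Or.inr ⟨fun hA' => by omega, fun hB' => hBs hB'.1,
          ⟨⟨by omega, hfu.2⟩, hBs, G3 (by omega) hBs, by omega⟩⟩)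
  · intro hR
    simp only [Set.mem_insert_iff, Set.mem_singleton_iff, Finset.mem_Icc] at hR
    refine ⟨FencAux.col k s (f (.inl 0)) (f (.inl 1)) (f (.inl 2)),
      FencAux.construct k s _ _ _ hk hs4 hsk ⟨hfu.1, hfu.2⟩ ?_ ?_ ?_ ?_ ?_,
      ?_, ?_, ?_, ?_⟩
    · omega
    · omega
    · omega
    · omega
    · omega
    · rfl
    · rfl
    · rfl
    · exact fun y => (hfy y).symm
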